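/- For every integer k ≥ 1, the real symmetric k×k matrix C^{(k)} with entries c^{(k)}_{l,m} (1 ≤ l,m ≤ k) has exactly ⌈k/2⌉ positive eigenvalues and exactly k − ⌈k/2⌉ negative eigenvalues (counted with multiplicity); in particular 0 is not an eigenvalue. -/

import Mathlib

/-- Unsigned Stirling numbers of the first kind: the number of permutations of
`n` elements with exactly `p` cycles. -/
def stirling1 : ℕ → ℕ → ℕ
  | 0, 0 => 1
  | 0, _ + 1 => 0
  | _ + 1, 0 => 0
  | n + 1, p + 1 => n * stirling1 n (p + 1) + stirling1 n p

/-- Stirling numbers of the second kind: the number of partitions of an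
`n`-element set into `p` nonempty blocks (`stirling2 p l = 0` when `p < l`). -/
def stirling2 : ℕ → ℕ → ℕ
  | 0, 0 => 1
  | 0, _ + 1 => 0
  | _ + 1, 0 => 0
  | n + 1, p + 1 => (p + 1) * stirling2 n (p + 1) + stirling2 n p

/-- The coefficients `c^(k)_{l,m} = ∑_{p=1}^k (-1)^(k-p) s(k,p) S(p,l) S(p,m)`. -/
def c (k l m : ℕ) : ℤ :=
  ∑ p ∈ Finset.Icc 1 k,
    (-1 : ℤ) ^ (k - p) * (stirling1 k p : ℤ) * (stirling2 p l : ℤ) * (stirling2 p m : ℤ)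

section Aux
open Matrix Module Finset

lemma stirling1_pos : ∀ n p : ℕ, 1 ≤ p → p ≤ n → 0 < stirling1 n p := by
  intro n
  induction n with
  | zero => omega
  | succ n ih =>
    intro p h1 h2
    match p, h1 with
    | p + 1, _ =>
      rw [stirling1]
      rcases Nat.eq_or_lt_of_le h2 with h | h
      · rcases Nat.eq_zero_or_pos p with rfl | hp
        · have hn : n = 0 := by omega
          subst hn; norm_num [stirling1]
        · have := ih p hp (by omega)
          omega
      · have := ih (p+1) (by omega) (by omega)
        have hn : 1 ≤ n := by omega
        positivity

lemma stirling2_eq_zero : ∀ n l, n < l → stirling2 n l = 0 := by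
  intro n
  induction n with
  | zero => intro l h; match l, h with | l+1, _ => rfl
  | succ n ih =>
    intro l h
    match l, h with
    | l + 1, h =>
      rw [stirling2, ih (l+1) (by omega), ih l (by omega)]
      simp

lemma stirling2_self : ∀ n, stirling2 n n = 1 := by
  intro n; induction n with
  | zero => rfl
  | succ n ih =>
    rw [stirling2, ih, stirling2_eq_zero n (n+1) (by omega)]
    simp

lemma card_even_range : ∀ n : ℕ, ((Finset.range n).filter (fun p => Even p)).card = (n + 1) / 2 := by
  intro n; induction n with
  | zero => rfl
  | succ n ih =>
    rw [Finset.range_add_one, Finset.filter_insert]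
    by_cases h : Even n
    · rw [if_pos h, Finset.card_insert_of_notMem (by simp), ih]
      obtain ⟨m, rfl⟩ := h; omega
    · rw [if_neg h, ih]
      rw [Nat.not_even_iff] at h; omega

lemma card_even_fin (k : ℕ) :
    (Finset.univ.filter (fun p : Fin k => Even (k - 1 - (p : ℕ)))).card = (k + 1) / 2 := by
  have h1 : (Finset.univ.filter (fun p : Fin k => Even (k - 1 - (p : ℕ)))).card
      = (Finset.univ.filter (fun p : Fin k => Even (p : ℕ))).card := by
    apply Finset.card_bij' (fun p _ => ⟨k - 1 - (p : ℕ), by omega⟩)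
      (fun p _ => ⟨k - 1 - (p : ℕ), by omega⟩)
    · intro a ha
      have := a.isLt
      exact Fin.ext (by simp; omega)
    · intro a ha
      have := a.isLt
      exact Fin.ext (by simp; omega)
    · intro a ha
      simp only [Finset.mem_filter, Finset.mem_univ, true_and] at ha ⊢
      exact ha
    · intro a ha
      simp only [Finset.mem_filter, Finset.mem_univ, true_and] at ha ⊢
      have h2 : k - 1 - (k - 1 - (a : ℕ)) = (a : ℕ) := by have := a.isLt; omega
      rw [h2]; exact ha
  rw [h1, ← card_even_range k]
  rw [Finset.card_filter, Finset.card_filter, Fin.sum_univ_eq_sum_range (fun i => if Even i then 1 else 0)]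


lemma sum_Icc_fin {β : Type*} [AddCommMonoid β] (k : ℕ) (f : ℕ → β) :
    ∑ p ∈ Finset.Icc 1 k, f p = ∑ j : Fin k, f (j + 1) := by
  rw [Fin.sum_univ_eq_sum_range (fun j => f (j + 1))]
  induction k with
  | zero => simp
  | succ n ih =>
    rw [Finset.sum_range_succ, ← ih, Finset.sum_Icc_succ_top (by omega)]


lemma rank_sum_le {k : ℕ} (W1 W2 : Submodule ℝ (Fin k → ℝ))
    (h : ∀ x, x ∈ W1 → x ∈ W2 → x = 0) :
    finrank ℝ W1 + finrank ℝ W2 ≤ k := by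
  have hinf : W1 ⊓ W2 = ⊥ := by
    rw [Submodule.eq_bot_iff]; intro x hx; exact h x hx.1 hx.2
  have h1 := Submodule.finrank_sup_add_finrank_inf_eq W1 W2
  rw [hinf, finrank_bot, add_zero] at h1
  have h2 := Submodule.finrank_le (W1 ⊔ W2)
  rw [Module.finrank_fin_fun] at h2
  omega

noncomputable def spanSingle {k : ℕ} (S : Finset (Fin k)) : Submodule ℝ (Fin k → ℝ) :=
  Submodule.span ℝ (Set.range (fun i : S => Pi.single (i : Fin k) (1:ℝ)))

lemma mem_span_single {k : ℕ} (S : Finset (Fin k)) {x : Fin k → ℝ}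
    (hx : x ∈ spanSingle S)
    {i : Fin k} (hi : i ∉ S) : x i = 0 := by
  rw [spanSingle] at hx
  induction hx using Submodule.span_induction with
  | mem x h =>
    obtain ⟨j, rfl⟩ := h
    exact Pi.single_eq_of_ne (by rintro rfl; exact hi j.2) 1
  | zero => rfl
  | add a b _ _ ha hb => simp [ha, hb]
  | smul r a _ ha => simp [ha]

lemma finrank_span_single {k : ℕ} (S : Finset (Fin k)) :
    finrank ℝ (spanSingle S) = S.card := by
  rw [spanSingle]
  have hli : LinearIndependent ℝ (fun i : S => (Pi.single (i : Fin k) (1:ℝ) : Fin k → ℝ)) := by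
    have := (Pi.basisFun ℝ (Fin k)).linearIndependent.comp
      (fun i : S => (i : Fin k)) Subtype.val_injective
    have he : (fun i : S => (Pi.single (i : Fin k) (1:ℝ) : Fin k → ℝ))
        = (⇑(Pi.basisFun ℝ (Fin k)) ∘ fun i : S => (i : Fin k)) := by
      funext i; simp [Function.comp]
    rw [he]; exact this
  rw [finrank_span_eq_card hli, Fintype.card_coe]

lemma dot_diag {k : ℕ} (d x : Fin k → ℝ) :
    x ⬝ᵥ (diagonal d) *ᵥ x = ∑ i, d i * x i ^ 2 := by
  rw [dotProduct]
  refine Finset.sum_congr rfl fun i _ => ?_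
  rw [mulVec_diagonal]
  ring

lemma dot_congr {k : ℕ} (M A : Matrix (Fin k) (Fin k) ℝ) (c : Fin k → ℝ) :
    (A *ᵥ c) ⬝ᵥ M *ᵥ (A *ᵥ c) = c ⬝ᵥ (Aᵀ * M * A) *ᵥ c := by
  rw [← mulVec_mulVec, ← mulVec_mulVec, dotProduct_mulVec c, vecMul_transpose]

lemma subspace_of_congr {k : ℕ} (M A : Matrix (Fin k) (Fin k) ℝ) (hA : Invertible A)
    (d : Fin k → ℝ) (hdiag : Aᵀ * M * A = diagonal d) (S : Finset (Fin k)) :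
    ∃ W : Submodule ℝ (Fin k → ℝ), finrank ℝ W = S.card ∧
      ∀ x ∈ W, x ≠ 0 → ∃ c : Fin k → ℝ, c ≠ 0 ∧ (∀ i ∉ S, c i = 0) ∧
        x ⬝ᵥ M *ᵥ x = ∑ i, d i * c i ^ 2 := by
  set e := A.toLinearEquiv' hA
  refine ⟨(spanSingle S).map
    (e : (Fin k → ℝ) →ₗ[ℝ] (Fin k → ℝ)), ?_, ?_⟩
  · rw [LinearEquiv.finrank_map_eq, finrank_span_single]
  · rintro x ⟨c, hc, rfl⟩ hx0
    refine ⟨c, ?_, fun i hi => mem_span_single S hc hi, ?_⟩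
    · rintro rfl; exact hx0 (map_zero _)
    · have hec : e c = A *ᵥ c := by
        simp [e, Matrix.toLinearEquiv'_apply]
        rfl
      rw [LinearEquiv.coe_coe, hec, dot_congr, hdiag, dot_diag]


lemma inertia_le {k : ℕ} (M A B : Matrix (Fin k) (Fin k) ℝ) (hA : Invertible A) (hB : Invertible B)
    (d e : Fin k → ℝ) (hAd : Aᵀ * M * A = diagonal d) (hBe : Bᵀ * M * B = diagonal e)
    (he : ∀ i, e i ≠ 0) :
    (univ.filter fun i => 0 < d i).card ≤ (univ.filter fun i => 0 < e i).card := by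
  obtain ⟨W1, hW1r, hW1⟩ := subspace_of_congr M A hA d hAd (univ.filter fun i => 0 < d i)
  obtain ⟨W2, hW2r, hW2⟩ := subspace_of_congr M B hB e hBe (univ.filter fun i => e i < 0)
  have key : finrank ℝ W1 + finrank ℝ W2 ≤ k := by
    apply rank_sum_le
    intro x hx1 hx2
    by_contra hx0
    obtain ⟨c1, hc1, hc1s, hc1v⟩ := hW1 x hx1 hx0
    obtain ⟨c2, hc2, hc2s, hc2v⟩ := hW2 x hx2 hx0
    have hpos : 0 < x ⬝ᵥ M *ᵥ x := by
      rw [hc1v]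
      apply Finset.sum_pos'
      · intro i _
        by_cases hi : i ∈ univ.filter fun i => 0 < d i
        · simp only [mem_filter] at hi
          exact mul_nonneg hi.2.le (sq_nonneg _)
        · rw [hc1s i hi]; simp
      · obtain ⟨i, hi⟩ := Function.ne_iff.mp hc1
        have hiS : i ∈ univ.filter fun i => 0 < d i := by
          by_contra hiS; exact hi (hc1s i hiS)
        refine ⟨i, mem_univ i, ?_⟩
        simp only [mem_filter] at hiS
        have hi' : c1 i ≠ 0 := by simpa using hi
        have h2 : (0:ℝ) < c1 i ^ 2 := by
          rcases hi'.lt_or_gt with h | h <;> nlinarith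
        exact mul_pos hiS.2 h2
    have hneg : x ⬝ᵥ M *ᵥ x ≤ 0 := by
      rw [hc2v]
      apply Finset.sum_nonpos
      intro i _
      by_cases hi : i ∈ univ.filter fun i => e i < 0
      · simp only [mem_filter] at hi
        have : (0:ℝ) ≤ c2 i ^ 2 := sq_nonneg _
        nlinarith [hi.2]
      · rw [hc2s i hi]; simp
    linarith
  have hcard : (univ.filter fun i => e i < 0).card + (univ.filter fun i => 0 < e i).card = k := by
    have := Finset.card_filter_add_card_filter_not (s := (univ : Finset (Fin k)))
      (p := fun i => e i < 0)
    rw [Finset.card_univ, Fintype.card_fin] at this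
    have hf : (univ.filter fun a => ¬ e a < 0) = (univ.filter fun i => 0 < e i) := by
      apply Finset.filter_congr
      intro i _
      have := he i
      constructor <;> intro h
      · exact lt_of_le_of_ne (not_lt.mp h) (Ne.symm this)
      · exact not_lt.mpr h.le
    rw [hf] at this
    exact this
  rw [hW1r, hW2r] at key
  omega


end Aux

open Matrix Module Finset in
/-- The real symmetric matrix `C^(k)` has exactly `⌈k/2⌉` positive eigenvalues and
`k - ⌈k/2⌉` negative eigenvalues, counted with multiplicity; `0` is not an eigenvalue. -/
theorem c_matrix_signature (k : ℕ) (hk : 1 ≤ k)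
    (M : Matrix (Fin k) (Fin k) ℝ)
    (hM : ∀ l m : Fin k, M l m = (c k (l.1 + 1) (m.1 + 1) : ℝ))
    (hHerm : M.IsHermitian) :
    (Finset.univ.filter fun i => 0 < hHerm.eigenvalues i).card = (k + 1) / 2 ∧
      (Finset.univ.filter fun i => hHerm.eigenvalues i < 0).card = k - (k + 1) / 2 ∧
      ∀ i, hHerm.eigenvalues i ≠ 0 := by
  classical
  set St : Matrix (Fin k) (Fin k) ℝ :=
    Matrix.of (fun p l : Fin k => (stirling2 (p.1 + 1) (l.1 + 1) : ℝ)) with hSt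
  set a : Fin k → ℝ :=
    fun p => (-1 : ℝ) ^ (k - (p.1 + 1)) * (stirling1 k (p.1 + 1) : ℝ) with ha
  -- factorization
  have hMfact : Stᵀ * diagonal a * St = M := by
    ext l m
    rw [hM l m, Matrix.mul_apply]
    have : ∀ p : Fin k, (Stᵀ * diagonal a) l p * St p m
        = a p * St p l * St p m := by
      intro p
      rw [Matrix.mul_diagonal, Matrix.transpose_apply]
      ring
    simp only [this]
    rw [c, sum_Icc_fin k]
    push_cast
    refine Finset.sum_congr rfl fun p _ => ?_
    simp only [hSt, ha, Matrix.of_apply]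
  -- determinant of St
  have hStBT : St.BlockTriangular OrderDual.toDual := by
    intro i j hij
    simp only [hSt, Matrix.of_apply]
    rw [stirling2_eq_zero (i.1 + 1) (j.1 + 1) (by exact_mod_cast Nat.add_lt_add_right hij 1)]
    simp
  have hdetSt : St.det = 1 := by
    rw [Matrix.det_of_lowerTriangular St hStBT]
    apply Finset.prod_eq_one
    intro i _
    simp only [hSt, Matrix.of_apply]
    rw [stirling2_self]
    simp
  have hStInv : Invertible St := St.invertibleOfIsUnitDet (by rw [hdetSt]; exact isUnit_one)
  -- congruence of M to diagonal a via B = ⅟St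
  have h1 : (⅟St)ᵀ * Stᵀ = 1 := by
    rw [← Matrix.transpose_mul, mul_invOf_self, Matrix.transpose_one]
  have hBe : (⅟St)ᵀ * M * (⅟St) = diagonal a := by
    rw [← hMfact]
    calc (⅟St)ᵀ * (Stᵀ * diagonal a * St) * (⅟St)
        = ((⅟St)ᵀ * Stᵀ) * (diagonal a * (St * ⅟St)) := by
          simp only [Matrix.mul_assoc]
      _ = diagonal a := by rw [h1, mul_invOf_self, Matrix.mul_one, Matrix.one_mul]
  -- signs of a
  have haPos : ∀ p : Fin k, 0 < a p ↔ Even (k - (p.1 + 1)) := by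
    intro p
    have hs : (0:ℝ) < (stirling1 k (p.1 + 1) : ℝ) := by
      exact_mod_cast stirling1_pos k (p.1 + 1) (by omega) (by omega)
    constructor
    · intro h
      by_contra hodd
      rw [Nat.not_even_iff_odd] at hodd
      rw [ha] at h
      simp only at h
      rw [Odd.neg_one_pow hodd] at h
      nlinarith
    · intro hev
      rw [ha]
      simp only
      rw [Even.neg_one_pow hev]
      nlinarith
  have haNe : ∀ p : Fin k, a p ≠ 0 := by
    intro p
    have hs : (0:ℝ) < (stirling1 k (p.1 + 1) : ℝ) := by
      exact_mod_cast stirling1_pos k (p.1 + 1) (by omega) (by omega)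
    rw [ha]
    simp only
    rcases Nat.even_or_odd (k - (p.1 + 1)) with h | h
    · rw [Even.neg_one_pow h] ; nlinarith
    · rw [Odd.neg_one_pow h] ; nlinarith
  have haNegIff : ∀ p : Fin k, a p < 0 ↔ ¬ (0 < a p) := by
    intro p
    have := haNe p
    constructor
    · intro h; exact not_lt.mpr h.le
    · intro h; exact lt_of_le_of_ne (not_lt.mp h) this
  -- spectral side
  set U : Matrix (Fin k) (Fin k) ℝ := (hHerm.eigenvectorUnitary : Matrix (Fin k) (Fin k) ℝ) with hU
  have hUunit : U ∈ Matrix.unitaryGroup (Fin k) ℝ := hHerm.eigenvectorUnitary.2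
  have hUInv : Invertible U :=
    ⟨star U, (Matrix.mem_unitaryGroup_iff').mp hUunit, (Matrix.mem_unitaryGroup_iff).mp hUunit⟩
  have hstarU : star U = Uᵀ := by
    rw [Matrix.star_eq_conjTranspose, Matrix.conjTranspose_eq_transpose_of_trivial]
  have hUe : Uᵀ * M * U = diagonal hHerm.eigenvalues := by
    have := hHerm.conjStarAlgAut_star_eigenvectorUnitary
    rw [Unitary.conjStarAlgAut_star_apply] at this
    rw [hstarU] at this
    rw [this]
    congr 1
  -- eigenvalues nonzero
  have hdetM : M.det ≠ 0 := by
    rw [← hMfact, Matrix.det_mul, Matrix.det_mul, Matrix.det_transpose, hdetSt,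
      Matrix.det_diagonal]
    simp only [one_mul, mul_one]
    exact Finset.prod_ne_zero_iff.mpr fun i _ => haNe i
  have hEigNe : ∀ i, hHerm.eigenvalues i ≠ 0 := by
    intro i hzero
    apply hdetM
    rw [hHerm.det_eq_prod_eigenvalues]
    refine Finset.prod_eq_zero (Finset.mem_univ i) ?_
    rw [hzero]
    norm_num
  -- counting
  have hq : (univ.filter fun i => 0 < a i).card = (k + 1) / 2 := by
    rw [← card_even_fin k]
    congr 1
    apply Finset.filter_congr
    intro i _
    have h1 : k - (i.1 + 1) = k - 1 - i.1 := by omega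
    rw [haPos i, h1]
  have hle1 := inertia_le M U (⅟St) hUInv (by exact invertibleInvOf) hHerm.eigenvalues a hUe hBe haNe
  have hle2 := inertia_le M (⅟St) U (by exact invertibleInvOf) hUInv a hHerm.eigenvalues hBe hUe hEigNe
  have hp : (univ.filter fun i => 0 < hHerm.eigenvalues i).card = (k + 1) / 2 := by
    rw [← hq]; omega
  refine ⟨hp, ?_, hEigNe⟩
  have hsplit := Finset.card_filter_add_card_filter_not
    (s := (univ : Finset (Fin k))) (p := fun i => 0 < hHerm.eigenvalues i)
  have hfneg : (univ.filter fun i => ¬ 0 < hHerm.eigenvalues i)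
      = (univ.filter fun i => hHerm.eigenvalues i < 0) := by
    apply Finset.filter_congr
    intro i _
    have := hEigNe i
    constructor
    · intro h; exact lt_of_le_of_ne (not_lt.mp h) this
    · intro h; exact not_lt.mpr h.le
  rw [hfneg, Finset.card_univ, Fintype.card_fin, hp] at hsplit
  omega
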